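/- Consider the finite-volume Ising model on a finite set Λ ⊂ ℤ^d containing the origin o, with inverse temperature β ≥ 0 and ferromagnetic couplings J ≥ 0. Then for every x ∈ Λ with x ≠ o: tanh(β J_{o,x}) ≤ ⟨φ_o φ_x⟩_{β,Λ} ≤ ∑_{y ∈ Λ, y ≠ o} tanh(β J_{o,y}) ⟨φ_y φ_x⟩_{β,Λ}. -/

import Mathlib

open scoped BigOperators ENNReal
open Filter

noncomputable section

namespace LongRange

abbrev V (d : ℕ) : Type := Fin d → ℤ

variable {d : ℕ}

def nrm (x : V d) : ℝ := Real.sqrt (∑ i, ((x i : ℝ)) ^ 2)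

/-- The spin value attached to a Boolean. -/
def spin (b : Bool) : ℝ := if b then 1 else -1

/-- The Ising Hamiltonian on the finite volume `Λ` with couplings `J`
(free boundary condition); the sum over unordered pairs of distinct
vertices is written as half the sum over ordered pairs. -/
def isingH (Λ : Finset (V d)) (J : V d → V d → ℝ) (φ : ↥Λ → Bool) : ℝ :=
  -(1 / 2) * ∑ u : ↥Λ, ∑ v : ↥Λ,
      if u.1 ≠ v.1 then J u.1 v.1 * spin (φ u) * spin (φ v) else 0

/-- The finite-volume Ising two-point function `⟨φ_a φ_b⟩_{β,Λ}`. -/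
def corr (Λ : Finset (V d)) (β : ℝ) (J : V d → V d → ℝ) (a b : ↥Λ) : ℝ :=
  (∑ φ : ↥Λ → Bool, spin (φ a) * spin (φ b) * Real.exp (-(β * isingH Λ J φ))) /
    ∑ φ : ↥Λ → Bool, Real.exp (-(β * isingH Λ J φ))


section Aux
variable {ι : Type*} [Fintype ι] [DecidableEq ι]
set_option linter.unusedSectionVars false

lemma spin_mul_self (b : Bool) : spin b * spin b = 1 := by cases b <;> norm_num [spin]

lemma spin_pow_mod (b : Bool) (n : ℕ) : spin b ^ n = spin b ^ (n % 2) := by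
  cases b
  · simp only [spin, Bool.false_eq_true, if_false]
    exact neg_one_pow_eq_pow_mod_two n
  · simp [spin]

/-- monomial in the spins -/
def mono (m : Multiset ι) (φ : ι → Bool) : ℝ := (m.map fun i => spin (φ i)).prod

@[simp] lemma mono_zero (φ : ι → Bool) : mono (0 : Multiset ι) φ = 1 := rfl

@[simp] lemma mono_cons (a : ι) (m : Multiset ι) (φ : ι → Bool) :
    mono (a ::ₘ m) φ = spin (φ a) * mono m φ := by
  simp [mono]

lemma mono_add (m₁ m₂ : Multiset ι) (φ : ι → Bool) :
    mono (m₁ + m₂) φ = mono m₁ φ * mono m₂ φ := by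
  simp [mono]

lemma mono_replicate (n : ℕ) (a : ι) (φ : ι → Bool) :
    mono (Multiset.replicate n a) φ = spin (φ a) ^ n := by
  simp [mono, Multiset.map_replicate, Multiset.prod_replicate]

lemma mono_finset (T : Finset ι) (φ : ι → Bool) :
    mono T.val φ = ∏ y ∈ T, spin (φ y) := rfl

lemma sum_mono_nonneg (m : Multiset ι) : 0 ≤ ∑ φ : ι → Bool, mono m φ := by
  have h1 : ∀ φ : ι → Bool, mono m φ = ∏ i : ι, spin (φ i) ^ m.count i := by
    intro φ
    unfold mono
    rw [Finset.prod_multiset_map_count m (fun i => spin (φ i))]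
    apply Finset.prod_subset (Finset.subset_univ _)
    intro i _ hi
    rw [Multiset.count_eq_zero_of_notMem (fun h => hi (Multiset.mem_toFinset.2 h)), pow_zero]
  simp_rw [h1]
  have key := Fintype.prod_sum (R := ℝ) (ι := ι) (κ := fun _ : ι => Bool)
    (fun i b => spin b ^ m.count i)
  rw [← key]
  refine Finset.prod_nonneg fun i _ => ?_
  rw [Fintype.sum_bool]
  have : spin true = 1 := rfl
  have h2 : spin false = -1 := rfl
  rw [this, h2, one_pow]
  rcases Nat.even_or_odd (m.count i) with he | ho
  · rw [he.neg_one_pow]; norm_num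
  · rw [ho.neg_one_pow]; norm_num

lemma exp_spin (c : ℝ) (a b : Bool) :
    Real.exp (c * (spin a * spin b)) = Real.cosh c + Real.sinh c * (spin a * spin b) := by
  have h1 := Real.cosh_add_sinh c
  have h2 := Real.cosh_sub_sinh c
  cases a <;> cases b <;>
      simp only [spin, Bool.false_eq_true, if_false, if_true] <;>
    norm_num <;> linarith

lemma exp_spin' (c : ℝ) (a b : Bool) :
    Real.exp (c * (spin a * spin b)) =
      Real.cosh c * (Real.tanh c * (spin a * spin b) + 1) := by
  rw [exp_spin, Real.tanh_eq_sinh_div_cosh]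
  have hc := (Real.cosh_pos c).ne'
  field_simp
  ring

/-- energy functional (without the -1/2 factor; full double sum) -/
def En (K : ι → ι → ℝ) (φ : ι → Bool) : ℝ :=
  ∑ u : ι, ∑ v : ι, K u v * (spin (φ u) * spin (φ v))

lemma grif_aux (c : ι × ι → ℝ) (hc : ∀ p, 0 ≤ c p) (B : Finset (ι × ι)) :
    ∀ m : Multiset ι,
      0 ≤ ∑ φ : ι → Bool, mono m φ *
        ∏ p ∈ B, Real.exp (c p * (spin (φ p.1) * spin (φ p.2))) := by
  induction B using Finset.induction_on with
  | empty => intro m; simpa using sum_mono_nonneg m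
  | @insert p B hpB ih =>
    intro m
    have key : ∀ φ : ι → Bool,
        mono m φ * ∏ q ∈ insert p B, Real.exp (c q * (spin (φ q.1) * spin (φ q.2))) =
        Real.cosh (c p) *
            (mono m φ * ∏ q ∈ B, Real.exp (c q * (spin (φ q.1) * spin (φ q.2)))) +
          Real.sinh (c p) *
            (mono (p.1 ::ₘ p.2 ::ₘ m) φ *
              ∏ q ∈ B, Real.exp (c q * (spin (φ q.1) * spin (φ q.2)))) := by
      intro φ
      rw [Finset.prod_insert hpB, exp_spin, mono_cons, mono_cons]
      ring
    simp_rw [key]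
    rw [Finset.sum_add_distrib, ← Finset.mul_sum, ← Finset.mul_sum]
    exact add_nonneg (mul_nonneg (Real.cosh_pos (c p)).le (ih m))
      (mul_nonneg (Real.sinh_nonneg_iff.mpr (hc p)) (ih _))

/-- Griffiths' first inequality -/
lemma grif (β : ℝ) (hβ : 0 ≤ β) (K : ι → ι → ℝ) (hK : ∀ u v, 0 ≤ K u v) (m : Multiset ι) :
    0 ≤ ∑ φ : ι → Bool, mono m φ * Real.exp (β / 2 * En K φ) := by
  have h : ∀ φ : ι → Bool, β / 2 * En K φ =
      ∑ p : ι × ι, (β / 2 * K p.1 p.2) * (spin (φ p.1) * spin (φ p.2)) := by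
    intro φ
    rw [En, Fintype.sum_prod_type, Finset.mul_sum]
    refine Finset.sum_congr rfl fun u _ => ?_
    rw [Finset.mul_sum]
    refine Finset.sum_congr rfl fun v _ => ?_
    ring
  simp_rw [h, Real.exp_sum]
  exact grif_aux _ (fun p => mul_nonneg (by positivity) (hK _ _)) Finset.univ m

lemma mono_flip (o : ι) (m : Multiset ι) (φ : ι → Bool) :
    mono m (Function.update φ o (!(φ o))) = (-1) ^ m.count o * mono m φ := by
  induction m using Multiset.induction_on with
  | empty => simp
  | cons b m ih =>
    by_cases hb : b = o
    · subst hb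
      rw [mono_cons, mono_cons, ih, Multiset.count_cons_self, Function.update_self]
      have hs : spin (!(φ b)) = -spin (φ b) := by cases φ b <;> simp [spin]
      rw [hs]; ring
    · rw [mono_cons, mono_cons, ih, Multiset.count_cons_of_ne (Ne.symm hb),
        Function.update_of_ne hb]
      ring

lemma En_flip (K : ι → ι → ℝ) (o : ι) (hK : ∀ v, K o v = 0) (hK' : ∀ u, K u o = 0)
    (φ : ι → Bool) : En K (Function.update φ o (!(φ o))) = En K φ := by
  unfold En
  refine Finset.sum_congr rfl fun u _ => Finset.sum_congr rfl fun v _ => ?_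
  by_cases hu : u = o
  · subst hu; rw [hK]; ring
  · by_cases hv : v = o
    · subst hv; rw [hK']; ring
    · rw [Function.update_of_ne hu, Function.update_of_ne hv]

lemma sum_vanish (β : ℝ) (K : ι → ι → ℝ) (o : ι) (hK : ∀ v, K o v = 0)
    (hK' : ∀ u, K u o = 0) (n : ℕ) (m : Multiset ι) (hodd : Odd (n + m.count o)) :
    ∑ φ : ι → Bool, spin (φ o) ^ n * mono m φ * Real.exp (β / 2 * En K φ) = 0 := by
  set f : (ι → Bool) → ℝ :=
    fun φ => spin (φ o) ^ n * mono m φ * Real.exp (β / 2 * En K φ) with hf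
  have hinv : Function.Involutive (fun φ : ι → Bool => Function.update φ o (!(φ o))) := by
    intro φ; funext z
    by_cases hz : z = o
    · subst hz; simp
    · simp [Function.update_of_ne hz]
  set e : Equiv.Perm (ι → Bool) := Function.Involutive.toPerm _ hinv with hedef
  have h2 : ∑ φ : ι → Bool, f (e φ) = ∑ φ : ι → Bool, f φ :=
    Equiv.sum_comp e f
  have h3 : ∀ φ : ι → Bool, f (e φ) = -f φ := by
    intro φ
    have he : e φ = Function.update φ o (!(φ o)) := rfl
    rw [he, hf]
    simp only
    rw [mono_flip, En_flip K o hK hK', Function.update_self]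
    have hs : spin (!(φ o)) = -spin (φ o) := by cases φ o <;> simp [spin]
    rw [hs, neg_pow]
    have hne : (-1 : ℝ) ^ n * (-1 : ℝ) ^ m.count o = -1 := by
      rw [← pow_add]; exact hodd.neg_one_pow
    have hrw : ∀ A B C : ℝ, ((-1 : ℝ) ^ n * A) * ((-1 : ℝ) ^ m.count o * B) * C =
        ((-1 : ℝ) ^ n * (-1 : ℝ) ^ m.count o) * (A * B * C) := by intros; ring
    rw [hrw, hne]; ring
  simp_rw [h3] at h2
  rw [Finset.sum_neg_distrib] at h2
  linarith


lemma tanh_nonneg' {x : ℝ} (hx : 0 ≤ x) : 0 ≤ Real.tanh x := by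
  rw [Real.tanh_eq_sinh_div_cosh]
  exact div_nonneg (Real.sinh_nonneg_iff.mpr hx) (Real.cosh_pos x).le

/-- generalized correlation functional -/
def GG (β : ℝ) (K : ι → ι → ℝ) (o : ι) (n : ℕ) (m : Multiset ι) : ℝ :=
  ∑ φ : ι → Bool, spin (φ o) ^ n * mono m φ * Real.exp (β / 2 * En K φ)

lemma GG_nonneg (β : ℝ) (hβ : 0 ≤ β) (K : ι → ι → ℝ) (hK : ∀ u v, 0 ≤ K u v)
    (o : ι) (n : ℕ) (m : Multiset ι) : 0 ≤ GG β K o n m := by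
  have h : ∀ φ : ι → Bool, spin (φ o) ^ n * mono m φ =
      mono (Multiset.replicate n o + m) φ := by
    intro φ; rw [mono_add, mono_replicate]
  unfold GG
  simp_rw [h]
  exact grif β hβ K hK _

lemma GG_parity (β : ℝ) (K : ι → ι → ℝ) (o : ι) (n : ℕ) (m : Multiset ι) :
    GG β K o n m = GG β K o (n % 2) m := by
  unfold GG
  exact Finset.sum_congr rfl fun φ _ => by rw [spin_pow_mod]

lemma GG_vanish (β : ℝ) (K : ι → ι → ℝ) (o : ι) (hK : ∀ v, K o v = 0)
    (hK' : ∀ u, K u o = 0) (n : ℕ) (m : Multiset ι) (hodd : Odd (n + m.count o)) :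
    GG β K o n m = 0 :=
  sum_vanish β K o hK hK' n m hodd

lemma reindex (o : ι) (u : Finset ι → ℝ) :
    ∑ T : Finset ι, ∑ y ∈ Finset.univ \ insert o T, u (insert y T) =
      ∑ T : Finset ι, ∑ _y ∈ T.erase o, u T := by
  rw [Finset.sum_sigma', Finset.sum_sigma']
  refine Finset.sum_nbij' (fun p => ⟨insert p.2 p.1, p.2⟩)
    (fun p => ⟨p.1.erase p.2, p.2⟩) ?_ ?_ ?_ ?_ ?_
  · rintro ⟨T, y⟩ hp
    simp only [Finset.mem_sigma, Finset.mem_univ, Finset.mem_sdiff, Finset.mem_insert,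
      not_or, true_and] at hp ⊢
    exact Finset.mem_erase.mpr ⟨hp.1, Finset.mem_insert_self _ _⟩
  · rintro ⟨T, y⟩ hp
    simp only [Finset.mem_sigma, Finset.mem_univ, Finset.mem_sdiff, Finset.mem_insert,
      not_or, true_and] at hp ⊢
    have hy := Finset.mem_erase.mp hp
    exact ⟨hy.1, Finset.notMem_erase _ _⟩
  · rintro ⟨T, y⟩ hp
    simp only [Finset.mem_sigma, Finset.mem_univ, Finset.mem_sdiff, Finset.mem_insert,
      not_or, true_and] at hp
    have : (insert y T).erase y = T := Finset.erase_insert hp.2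
    simp only [this]
  · rintro ⟨T, y⟩ hp
    simp only [Finset.mem_sigma, Finset.mem_univ, true_and] at hp
    have hy := Finset.mem_erase.mp hp
    have : insert y (T.erase y) = T := Finset.insert_erase hy.2
    simp only [this]
  · rintro ⟨T, y⟩ hp
    rfl


lemma sum_ite_single (a : ι) (f : ι → ℝ) : (∑ u : ι, if u = a then f u else 0) = f a := by
  simp

lemma low (β : ℝ) (hβ : 0 ≤ β) (K : ι → ι → ℝ) (hK : ∀ u v, 0 ≤ K u v)
    (hKs : ∀ u v, K u v = K v u) (o xx : ι) (hox : o ≠ xx) :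
    Real.tanh (β * K o xx) * ∑ φ : ι → Bool, Real.exp (β / 2 * En K φ) ≤
      ∑ φ : ι → Bool, spin (φ o) * spin (φ xx) * Real.exp (β / 2 * En K φ) := by
  classical
  set c := K o xx with hc
  set K₂ : ι → ι → ℝ :=
    fun u v => if (u = o ∧ v = xx) ∨ (u = xx ∧ v = o) then 0 else K u v with hK₂
  have hK₂nn : ∀ u v, 0 ≤ K₂ u v := by
    intro u v
    simp only [hK₂]
    split_ifs with h
    · exact le_refl 0
    · exact hK u v
  have hsum : ∀ φ : ι → Bool, ∀ u v : ι, K u v * (spin (φ u) * spin (φ v)) =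
      K₂ u v * (spin (φ u) * spin (φ v)) +
        ((if u = o then (if v = xx then c * (spin (φ u) * spin (φ v)) else 0) else 0) +
         (if u = xx then (if v = o then c * (spin (φ u) * spin (φ v)) else 0) else 0)) := by
    intro φ u v
    simp only [hK₂]
    by_cases hA : u = o ∧ v = xx
    · obtain ⟨hu, hv⟩ := hA
      rw [if_pos (Or.inl ⟨hu, hv⟩), if_pos hu, if_pos hv,
        if_neg (show ¬u = xx by rw [hu]; exact hox), hu, hv, ← hc]
      ring
    · by_cases hB : u = xx ∧ v = o
      · obtain ⟨hu, hv⟩ := hB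
        rw [if_pos (Or.inr ⟨hu, hv⟩), if_neg (show ¬u = o by rw [hu]; exact Ne.symm hox),
          if_pos hu, if_pos hv, hu, hv, hKs xx o, ← hc]
        ring
      · rw [if_neg (fun h => h.elim hA hB)]
        have e1 : (if u = o then (if v = xx then c * (spin (φ u) * spin (φ v)) else 0)
            else 0) = 0 := by
          split_ifs with h1 h2
          · exact absurd ⟨h1, h2⟩ hA
          · rfl
          · rfl
        have e2 : (if u = xx then (if v = o then c * (spin (φ u) * spin (φ v)) else 0)
            else 0) = 0 := by
          split_ifs with h1 h2
          · exact absurd ⟨h1, h2⟩ hB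
          · rfl
          · rfl
        rw [e1, e2]
        ring
  have hEn : ∀ φ : ι → Bool,
      En K φ = En K₂ φ + 2 * c * (spin (φ o) * spin (φ xx)) := by
    intro φ
    have hB : (∑ u : ι, ∑ v : ι,
        (if u = o then (if v = xx then c * (spin (φ u) * spin (φ v)) else 0) else 0)) =
        c * (spin (φ o) * spin (φ xx)) := by
      have h1 : ∀ u : ι, (∑ v : ι,
          (if u = o then (if v = xx then c * (spin (φ u) * spin (φ v)) else 0) else 0)) =
          (if u = o then c * (spin (φ u) * spin (φ xx)) else 0) := by
        intro u
        by_cases hu : u = o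
        · simp only [if_pos hu]
          exact sum_ite_single xx _
        · simp only [if_neg hu, Finset.sum_const_zero]
      simp_rw [h1]
      exact sum_ite_single o _
    have hD : (∑ u : ι, ∑ v : ι,
        (if u = xx then (if v = o then c * (spin (φ u) * spin (φ v)) else 0) else 0)) =
        c * (spin (φ xx) * spin (φ o)) := by
      have h1 : ∀ u : ι, (∑ v : ι,
          (if u = xx then (if v = o then c * (spin (φ u) * spin (φ v)) else 0) else 0)) =
          (if u = xx then c * (spin (φ u) * spin (φ o)) else 0) := by
        intro u
        by_cases hu : u = xx
        · simp only [if_pos hu]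
          exact sum_ite_single o _
        · simp only [if_neg hu, Finset.sum_const_zero]
      simp_rw [h1]
      exact sum_ite_single xx _
    calc En K φ = ∑ u : ι, ∑ v : ι, (K₂ u v * (spin (φ u) * spin (φ v)) +
        ((if u = o then (if v = xx then c * (spin (φ u) * spin (φ v)) else 0) else 0) +
         (if u = xx then (if v = o then c * (spin (φ u) * spin (φ v)) else 0) else 0))) :=
          Finset.sum_congr rfl fun u _ => Finset.sum_congr rfl fun v _ => hsum φ u v
      _ = En K₂ φ + 2 * c * (spin (φ o) * spin (φ xx)) := by
          simp only [Finset.sum_add_distrib]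
          rw [hB, hD]
          unfold En
          ring
  have hω : ∀ φ : ι → Bool, Real.exp (β / 2 * En K φ) =
      (Real.cosh (β * c) + Real.sinh (β * c) * (spin (φ o) * spin (φ xx))) *
        Real.exp (β / 2 * En K₂ φ) := by
    intro φ
    rw [hEn φ, mul_add, Real.exp_add,
      show β / 2 * (2 * c * (spin (φ o) * spin (φ xx))) =
        (β * c) * (spin (φ o) * spin (φ xx)) by ring,
      exp_spin]
    ring
  set S' := ∑ φ : ι → Bool, spin (φ o) * spin (φ xx) * Real.exp (β / 2 * En K₂ φ) with hS'
  set Z' := ∑ φ : ι → Bool, Real.exp (β / 2 * En K₂ φ) with hZ'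
  have hS'nn : 0 ≤ S' := by
    rw [hS']
    refine le_of_le_of_eq (grif β hβ K₂ hK₂nn (o ::ₘ xx ::ₘ 0))
      (Finset.sum_congr rfl fun φ _ => ?_)
    rw [mono_cons, mono_cons, mono_zero]
    ring
  have hZeq : (∑ φ : ι → Bool, Real.exp (β / 2 * En K φ)) =
      Real.cosh (β * c) * Z' + Real.sinh (β * c) * S' := by
    simp_rw [hω]
    rw [hZ', hS', Finset.mul_sum, Finset.mul_sum, ← Finset.sum_add_distrib]
    exact Finset.sum_congr rfl fun φ _ => by ring
  have hNeq : (∑ φ : ι → Bool, spin (φ o) * spin (φ xx) * Real.exp (β / 2 * En K φ)) =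
      Real.cosh (β * c) * S' + Real.sinh (β * c) * Z' := by
    simp_rw [hω]
    rw [hS', hZ', Finset.mul_sum, Finset.mul_sum, ← Finset.sum_add_distrib]
    refine Finset.sum_congr rfl fun φ _ => ?_
    have h1 : spin (φ o) * spin (φ xx) * (spin (φ o) * spin (φ xx)) = 1 := by
      rw [mul_mul_mul_comm, spin_mul_self, spin_mul_self, one_mul]
    linear_combination (Real.sinh (β * c) * Real.exp (β / 2 * En K₂ φ)) * h1
  rw [hZeq, hNeq, Real.tanh_eq_sinh_div_cosh]
  have hch := Real.cosh_pos (β * c)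
  rw [div_mul_eq_mul_div, div_le_iff₀ hch]
  have hsq := Real.cosh_sq_sub_sinh_sq (β * c)
  nlinarith [hS'nn, hsq]


lemma GG_cons_self (β : ℝ) (K : ι → ι → ℝ) (o : ι) (n : ℕ) (m : Multiset ι) :
    GG β K o n (o ::ₘ m) = GG β K o (n + 1) m := by
  unfold GG
  refine Finset.sum_congr rfl fun φ _ => ?_
  rw [mono_cons, pow_succ]
  ring

lemma up (β : ℝ) (hβ : 0 ≤ β) (K : ι → ι → ℝ) (hK : ∀ u v, 0 ≤ K u v)
    (hKs : ∀ u v, K u v = K v u) (o xx : ι) (hox : o ≠ xx) (hoo : K o o = 0) :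
    ∑ φ : ι → Bool, spin (φ o) * spin (φ xx) * Real.exp (β / 2 * En K φ) ≤
      ∑ y : ι, Real.tanh (β * K o y) *
        ∑ φ : ι → Bool, spin (φ y) * spin (φ xx) * Real.exp (β / 2 * En K φ) := by
  classical
  set K₀ : ι → ι → ℝ := fun u v => if u = o ∨ v = o then 0 else K u v with hK₀
  set t : ι → ℝ := fun y => Real.tanh (β * K o y) with ht
  have htnn : ∀ y, 0 ≤ t y := fun y => tanh_nonneg' (mul_nonneg hβ (hK o y))
  have hto : t o = 0 := by rw [ht]; simp only [hoo, mul_zero, Real.tanh_zero]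
  have hK₀nn : ∀ u v, 0 ≤ K₀ u v := by
    intro u v
    simp only [hK₀]
    split_ifs with h
    · exact le_refl 0
    · exact hK u v
  have hK₀o : ∀ v, K₀ o v = 0 := fun v => by simp [hK₀]
  have hK₀o' : ∀ u, K₀ u o = 0 := fun u => by simp [hK₀]
  -- energy splitting
  have hsum : ∀ φ : ι → Bool, ∀ u v : ι, K u v * (spin (φ u) * spin (φ v)) =
      K₀ u v * (spin (φ u) * spin (φ v)) +
        ((if u = o then K o v * (spin (φ u) * spin (φ v)) else 0) +
         (if v = o then K u o * (spin (φ u) * spin (φ v)) else 0)) := by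
    intro φ u v
    simp only [hK₀]
    by_cases hu : u = o
    · by_cases hv : v = o
      · rw [if_pos (Or.inl hu), if_pos hu, if_pos hv, hu, hv, hoo]
        ring
      · rw [if_pos (Or.inl hu), if_pos hu, if_neg hv, hu]
        ring
    · by_cases hv : v = o
      · rw [if_pos (Or.inr hv), if_neg hu, if_pos hv, hv]
        ring
      · rw [if_neg (fun h => h.elim hu hv), if_neg hu, if_neg hv]
        ring
  have hEn : ∀ φ : ι → Bool,
      En K φ = En K₀ φ + 2 * ∑ y : ι, K o y * (spin (φ o) * spin (φ y)) := by
    intro φ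
    have hB : (∑ u : ι, ∑ v : ι,
        (if u = o then K o v * (spin (φ u) * spin (φ v)) else 0)) =
        ∑ y : ι, K o y * (spin (φ o) * spin (φ y)) := by
      have h1 : ∀ u : ι, (∑ v : ι,
          (if u = o then K o v * (spin (φ u) * spin (φ v)) else 0)) =
          (if u = o then ∑ v : ι, K o v * (spin (φ u) * spin (φ v)) else 0) := by
        intro u
        by_cases hu : u = o
        · simp only [if_pos hu]
        · simp only [if_neg hu, Finset.sum_const_zero]
      simp_rw [h1]
      rw [sum_ite_single o _]
    have hD : (∑ u : ι, ∑ v : ι,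
        (if v = o then K u o * (spin (φ u) * spin (φ v)) else 0)) =
        ∑ y : ι, K o y * (spin (φ o) * spin (φ y)) := by
      have h1 : ∀ u : ι, (∑ v : ι,
          (if v = o then K u o * (spin (φ u) * spin (φ v)) else 0)) =
          K u o * (spin (φ u) * spin (φ o)) := by
        intro u
        exact sum_ite_single o _
      simp_rw [h1]
      exact Finset.sum_congr rfl fun y _ => by rw [hKs y o]; ring
    calc En K φ = ∑ u : ι, ∑ v : ι, (K₀ u v * (spin (φ u) * spin (φ v)) +
        ((if u = o then K o v * (spin (φ u) * spin (φ v)) else 0) +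
         (if v = o then K u o * (spin (φ u) * spin (φ v)) else 0))) :=
          Finset.sum_congr rfl fun u _ => Finset.sum_congr rfl fun v _ => hsum φ u v
      _ = En K₀ φ + 2 * ∑ y : ι, K o y * (spin (φ o) * spin (φ y)) := by
          simp only [Finset.sum_add_distrib]
          rw [hB, hD]
          unfold En
          ring
  -- weight factorization
  set CC := ∏ y : ι, Real.cosh (β * K o y) with hCC
  have hCCnn : 0 ≤ CC := Finset.prod_nonneg fun y _ => (Real.cosh_pos _).le
  have hfac : ∀ φ : ι → Bool, Real.exp (β / 2 * En K φ) =
      CC * (∑ T : Finset ι, (∏ y ∈ T, t y) * (spin (φ o) ^ T.card * mono T.val φ)) *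
        Real.exp (β / 2 * En K₀ φ) := by
    intro φ
    rw [hEn φ, mul_add, Real.exp_add, mul_comm (Real.exp _)]
    congr 1
    rw [show β / 2 * (2 * ∑ y : ι, K o y * (spin (φ o) * spin (φ y))) =
      ∑ y : ι, (β * K o y) * (spin (φ o) * spin (φ y)) by
        rw [Finset.mul_sum, Finset.mul_sum]; exact Finset.sum_congr rfl fun y _ => by ring,
      Real.exp_sum]
    have hfact : ∀ y : ι, Real.exp ((β * K o y) * (spin (φ o) * spin (φ y))) =
        Real.cosh (β * K o y) * (t y * (spin (φ o) * spin (φ y)) + 1) := by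
      intro y
      rw [exp_spin', ht]
    simp_rw [hfact]
    rw [Finset.prod_mul_distrib, ← hCC]
    congr 1
    rw [Fintype.prod_add (fun y => t y * (spin (φ o) * spin (φ y))) (fun _ => 1)]
    refine Finset.sum_congr rfl fun T _ => ?_
    rw [Finset.prod_const_one, mul_one, Finset.prod_mul_distrib, Finset.prod_mul_distrib,
      Finset.prod_const, mono_finset]
  -- the three sums in terms of GG
  have hNrep : ∀ z : ι, (∑ φ : ι → Bool, spin (φ z) * spin (φ xx) * Real.exp (β / 2 * En K φ))
      = CC * ∑ T : Finset ι, (∏ y ∈ T, t y) *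
          GG β K₀ o T.card (z ::ₘ xx ::ₘ T.val) := by
    intro z
    have key : ∀ φ : ι → Bool, spin (φ z) * spin (φ xx) * Real.exp (β / 2 * En K φ) =
        CC * ∑ T : Finset ι, (∏ y ∈ T, t y) *
          (spin (φ o) ^ T.card * mono (z ::ₘ xx ::ₘ T.val) φ *
            Real.exp (β / 2 * En K₀ φ)) := by
      intro φ
      rw [hfac φ, Finset.mul_sum, Finset.mul_sum, Finset.sum_mul, Finset.mul_sum]
      refine Finset.sum_congr rfl fun T _ => ?_
      rw [mono_cons, mono_cons]
      ring
    simp_rw [key]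
    rw [← Finset.mul_sum, Finset.sum_comm]
    congr 1
    refine Finset.sum_congr rfl fun T _ => ?_
    rw [GG, Finset.mul_sum]
  -- the subset functional
  set uu : Finset ι → ℝ :=
    fun T => (∏ y ∈ T, t y) * GG β K₀ o (T.card + 1) (xx ::ₘ T.val) with huu
  have huunn : ∀ T, 0 ≤ uu T := fun T =>
    mul_nonneg (Finset.prod_nonneg fun y _ => htnn y) (GG_nonneg β hβ K₀ hK₀nn o _ _)
  have huuzero : ∀ T : Finset ι, o ∈ T → uu T = 0 := by
    intro T hT
    rw [huu]
    simp only
    rw [Finset.prod_eq_zero hT hto, zero_mul]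
  have huuempty : uu ∅ = 0 := by
    rw [huu]
    simp only
    have hcnt : (xx ::ₘ (∅ : Finset ι).val).count o = 0 := by
      rw [show (∅ : Finset ι).val = 0 from rfl]
      rw [Multiset.count_cons_of_ne (hox), Multiset.count_zero]
    rw [GG_vanish β K₀ o hK₀o hK₀o' _ _ (by rw [hcnt]; simp), mul_zero]
  have hN : (∑ φ : ι → Bool, spin (φ o) * spin (φ xx) * Real.exp (β / 2 * En K φ)) =
      CC * ∑ T : Finset ι, uu T := by
    rw [hNrep o]
    congr 1
    refine Finset.sum_congr rfl fun T _ => ?_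
    rw [huu]
    simp only
    rw [GG_cons_self]
  have hstep : ∀ T : Finset ι, (∑ y ∈ Finset.univ \ insert o T, uu (insert y T)) ≤
      ∑ y : ι, t y * ((∏ z ∈ T, t z) * GG β K₀ o T.card (y ::ₘ xx ::ₘ T.val)) := by
    intro T
    have hpt : ∀ y ∈ Finset.univ \ insert o T, uu (insert y T) =
        t y * ((∏ z ∈ T, t z) * GG β K₀ o T.card (y ::ₘ xx ::ₘ T.val)) := by
      intro y hy
      simp only [Finset.mem_sdiff, Finset.mem_univ, true_and, Finset.mem_insert,
        not_or] at hy
      obtain ⟨hyo, hyT⟩ := hy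
      have hpar : ∀ m : Multiset ι, GG β K₀ o (T.card + 1 + 1) m = GG β K₀ o T.card m := by
        intro m
        rw [GG_parity β K₀ o (T.card + 1 + 1) m, GG_parity β K₀ o T.card m]
        congr 1
        omega
      rw [huu]
      simp only
      rw [Finset.prod_insert hyT, Finset.card_insert_of_notMem hyT,
        Finset.insert_val_of_notMem hyT, Multiset.cons_swap, hpar, Multiset.cons_swap]
      ring
    rw [Finset.sum_congr rfl hpt]
    refine Finset.sum_le_sum_of_subset_of_nonneg (Finset.subset_univ _) ?_
    intro y _ _
    exact mul_nonneg (htnn y) (mul_nonneg (Finset.prod_nonneg fun z _ => htnn z)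
      (GG_nonneg β hβ K₀ hK₀nn o _ _))
  have hcompare : (∑ T : Finset ι, uu T) ≤ ∑ T : Finset ι, ∑ _y ∈ T.erase o, uu T := by
    refine Finset.sum_le_sum fun T _ => ?_
    rw [Finset.sum_const, nsmul_eq_mul]
    by_cases hoT : o ∈ T
    · rw [huuzero T hoT, mul_zero]
    · rw [Finset.erase_eq_of_notMem hoT]
      rcases Finset.eq_empty_or_nonempty T with rfl | hne
      · rw [huuempty, mul_zero]
      · have hcard : (1 : ℝ) ≤ T.card := by
          exact_mod_cast Finset.card_pos.mpr hne
        nlinarith [huunn T]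
  have hfinal : (∑ y : ι, t y *
      ∑ φ : ι → Bool, spin (φ y) * spin (φ xx) * Real.exp (β / 2 * En K φ)) =
      CC * ∑ T : Finset ι, ∑ y : ι,
        t y * ((∏ z ∈ T, t z) * GG β K₀ o T.card (y ::ₘ xx ::ₘ T.val)) := by
    simp_rw [hNrep, Finset.mul_sum]
    rw [Finset.sum_comm]
    exact Finset.sum_congr rfl fun T _ => Finset.sum_congr rfl fun y _ => by ring
  have hchain : (∑ φ : ι → Bool, spin (φ o) * spin (φ xx) * Real.exp (β / 2 * En K φ)) ≤
      ∑ y : ι, t y *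
        ∑ φ : ι → Bool, spin (φ y) * spin (φ xx) * Real.exp (β / 2 * En K φ) := by
    rw [hN, hfinal]
    refine mul_le_mul_of_nonneg_left ?_ hCCnn
    calc (∑ T : Finset ι, uu T) ≤ ∑ T : Finset ι, ∑ _y ∈ T.erase o, uu T := hcompare
      _ = ∑ T : Finset ι, ∑ y ∈ Finset.univ \ insert o T, uu (insert y T) :=
          (reindex o uu).symm
      _ ≤ ∑ T : Finset ι, ∑ y : ι,
          t y * ((∏ z ∈ T, t z) * GG β K₀ o T.card (y ::ₘ xx ::ₘ T.val)) :=
          Finset.sum_le_sum fun T _ => hstep T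
  refine le_trans hchain (le_of_eq ?_)
  simp only [ht]

end Aux

/-- tanh(βJ_{o,x}) ≤ ⟨φ_o φ_x⟩ ≤ ∑_y tanh(βJ_{o,y}) ⟨φ_y φ_x⟩. -/
theorem statement7 (d : ℕ) (hd : 1 ≤ d) (Λ : Finset (V d)) (h0 : (0 : V d) ∈ Λ)
    (β : ℝ) (hβ : 0 ≤ β) (J : V d → V d → ℝ)
    (hJ : ∀ u v, 0 ≤ J u v) (hJs : ∀ u v, J u v = J v u)
    (x : V d) (hx : x ∈ Λ) (hxo : x ≠ 0) :
    Real.tanh (β * J 0 x) ≤ corr Λ β J ⟨0, h0⟩ ⟨x, hx⟩ ∧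
    corr Λ β J ⟨0, h0⟩ ⟨x, hx⟩ ≤
      ∑ y ∈ Λ.attach,
        if y.1 ≠ 0 then Real.tanh (β * J 0 y.1) * corr Λ β J y ⟨x, hx⟩ else 0 := by
  classical
  set o : ↥Λ := ⟨0, h0⟩ with ho
  set xx : ↥Λ := ⟨x, hx⟩ with hxxd
  have ho1 : o.1 = (0 : V d) := rfl
  have hxx1 : xx.1 = x := rfl
  have hox : o ≠ xx := by
    intro h
    apply hxo
    have h2 := congrArg Subtype.val h
    rw [ho1, hxx1] at h2
    exact h2.symm
  set K : ↥Λ → ↥Λ → ℝ := fun u v => if u.1 ≠ v.1 then J u.1 v.1 else 0 with hKdef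
  have hKnn : ∀ u v, 0 ≤ K u v := by
    intro u v
    simp only [hKdef]
    split_ifs
    · exact hJ _ _
    · exact le_refl 0
  have hKsym : ∀ u v, K u v = K v u := by
    intro u v
    simp only [hKdef]
    by_cases h : u.1 = v.1
    · rw [if_neg (not_not_intro h), if_neg (not_not_intro h.symm)]
    · rw [if_pos h, if_pos (Ne.symm h), hJs]
  have hKoo : K o o = 0 := by simp [hKdef]
  have hKox : K o xx = J 0 x := by
    simp only [hKdef]
    exact if_pos (Ne.symm hxo)
  have hbridge : ∀ φ : ↥Λ → Bool,
      Real.exp (-(β * isingH Λ J φ)) = Real.exp (β / 2 * En K φ) := by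
    intro φ
    congr 1
    have hEq : En K φ = ∑ u : ↥Λ, ∑ v : ↥Λ,
        (if u.1 ≠ v.1 then J u.1 v.1 * spin (φ u) * spin (φ v) else 0) := by
      unfold En
      refine Finset.sum_congr rfl fun u _ => Finset.sum_congr rfl fun v _ => ?_
      simp only [hKdef]
      split_ifs with h
      · ring
      · rw [zero_mul]
    rw [hEq]
    unfold isingH
    ring
  have hZpos : 0 < ∑ φ : ↥Λ → Bool, Real.exp (-(β * isingH Λ J φ)) :=
    Finset.sum_pos (fun φ _ => Real.exp_pos _) Finset.univ_nonempty
  constructor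
  · unfold corr
    rw [le_div_iff₀ hZpos]
    have hlow := low β hβ K hKnn hKsym o xx hox
    simp_rw [hbridge]
    rw [show β * J 0 x = β * K o xx by rw [hKox]]
    exact hlow
  · have hup := up β hβ K hKnn hKsym o xx hox hKoo
    simp_rw [← hbridge] at hup
    have hRHS : (∑ y ∈ Λ.attach,
        if y.1 ≠ 0 then Real.tanh (β * J 0 y.1) * corr Λ β J y xx else 0) =
        (∑ y : ↥Λ, Real.tanh (β * K o y) *
          ∑ φ : ↥Λ → Bool, spin (φ y) * spin (φ xx) * Real.exp (-(β * isingH Λ J φ))) /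
          (∑ φ : ↥Λ → Bool, Real.exp (-(β * isingH Λ J φ))) := by
      rw [← Finset.univ_eq_attach, Finset.sum_div]
      refine Finset.sum_congr rfl fun y _ => ?_
      by_cases hy : y.1 ≠ 0
      · rw [if_pos hy]
        unfold corr
        have hKoy : K o y = J 0 y.1 := by
          simp only [hKdef]
          exact if_pos (Ne.symm hy)
        rw [hKoy, mul_div_assoc]
      · rw [if_neg hy]
        push_neg at hy
        have hyo : y = o := Subtype.ext (by rw [hy, ho1])
        rw [hyo, hKoo, mul_zero, Real.tanh_zero, zero_mul, zero_div]
    rw [hRHS]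
    unfold corr
    gcongr

end LongRange
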